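/- Let H ∈ ℝ^{2n×2n} be symmetric, J the canonical Poisson matrix, and M(t) = exp(t J H) with lower-right n×n block D(t). Then the set R = {t ∈ ℝ : det D(t) = 0} has no finite accumulation point (it is discrete in ℝ). -/

import Mathlib

open Matrix Filter Topology

/-- The canonical Poisson matrix `J = [[0, Iₙ], [-Iₙ, 0]]`. -/
noncomputable def PoissonMatrix (n : ℕ) : Matrix (Fin n ⊕ Fin n) (Fin n ⊕ Fin n) ℝ :=
  Matrix.fromBlocks 0 1 (-1) 0

attribute [local instance] Matrix.linftyOpNormedRing Matrix.linftyOpNormedAlgebra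

/-- Each entry of `exp (t • A)` is a real-analytic function of `t`. -/
lemma analyticAt_exp_entry {m : Type*} [Fintype m] [DecidableEq m]
    (A : Matrix m m ℝ) (i j : m) (t : ℝ) :
    AnalyticAt ℝ (fun t : ℝ => NormedSpace.exp (t • A) i j) t := by
  have h1 : AnalyticAt ℝ (fun t : ℝ => t • A) t :=
    ((1 : ℝ →L[ℝ] ℝ).smulRight A).analyticAt t
  have h2 : AnalyticAt ℝ NormedSpace.exp (t • A) :=
    NormedSpace.analyticAt_exp_of_mem_ball (𝕂 := ℝ) (t • A)
      (by rw [NormedSpace.expSeries_radius_eq_top]; exact edist_lt_top _ _)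
  have h3 := h2.comp (x := t) h1
  have h4 : AnalyticAt ℝ (fun M : Matrix m m ℝ => M i j) (NormedSpace.exp (t • A)) :=
    ((Matrix.entryLinearMap ℝ ℝ i j).toContinuousLinearMap).analyticAt _
  exact h4.comp (x := t) h3

/-- The determinant of the lower-right block of `exp (t • A)` is analytic in `t`. -/
lemma analyticAt_detD {m : Type*} [Fintype m] [DecidableEq m]
    (A : Matrix (m ⊕ m) (m ⊕ m) ℝ) (t : ℝ) :
    AnalyticAt ℝ
      (fun t : ℝ => (Matrix.toBlocks₂₂ (NormedSpace.exp (t • A))).det) t := by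
  have : (fun t : ℝ => (Matrix.toBlocks₂₂ (NormedSpace.exp (t • A))).det) =
      fun t : ℝ => ∑ σ : Equiv.Perm m, ((Equiv.Perm.sign σ : ℤ) : ℝ) *
        ∏ i : m, NormedSpace.exp (t • A) (Sum.inr (σ i)) (Sum.inr i) := by
    funext t
    simp [Matrix.det_apply, Matrix.toBlocks₂₂, Units.smul_def, zsmul_eq_mul]
  rw [this]
  apply Finset.analyticAt_fun_sum
  intro σ _
  exact (analyticAt_const).mul <| Finset.analyticAt_fun_prod _
    (fun i _ => analyticAt_exp_entry A (Sum.inr (σ i)) (Sum.inr i) t)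

/-- For symmetric `H` and `M(t) = exp(tJH)` with lower-right block `D(t)`, the
resonance set `{t : det D(t) = 0}` has no finite accumulation point. -/
theorem resonance_set_discrete {n : ℕ} (H : Matrix (Fin n ⊕ Fin n) (Fin n ⊕ Fin n) ℝ)
    (hH : Hᵀ = H) :
    ∀ t₀ : ℝ, ¬ AccPt t₀ (𝓟 {t : ℝ |
      (Matrix.toBlocks₂₂ (NormedSpace.exp (t • (PoissonMatrix n * H)))).det = 0}) := by
  set A := PoissonMatrix n * H
  set f : ℝ → ℝ := fun t => (Matrix.toBlocks₂₂ (NormedSpace.exp (t • A))).det with hf_def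
  have hf : AnalyticOnNhd ℝ f Set.univ := fun t _ => analyticAt_detD A t
  have hf0 : f 0 = 1 := by
    have h1 : (Matrix.toBlocks₂₂ (1 : Matrix (Fin n ⊕ Fin n) (Fin n ⊕ Fin n) ℝ)) =
        (1 : Matrix (Fin n) (Fin n) ℝ) := by
      ext i j
      simp [Matrix.toBlocks₂₂, Matrix.one_apply, Sum.inr.injEq]
    simp [hf_def, NormedSpace.exp_zero, h1]
  intro t₀ hacc
  rcases (hf t₀ (Set.mem_univ _)).eventually_eq_zero_or_eventually_ne_zero with h | h
  · have hzero : Set.EqOn f 0 Set.univ :=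
      hf.eqOn_zero_of_preconnected_of_eventuallyEq_zero isPreconnected_univ
        (Set.mem_univ t₀) h
    have := hzero (Set.mem_univ (0 : ℝ))
    rw [hf0] at this
    simpa using this
  · have h1 : ∀ᶠ z in 𝓝[≠] t₀ ⊓ 𝓟 {t : ℝ | f t = 0}, f z ≠ 0 :=
      h.filter_mono inf_le_left
    have h2 : ∀ᶠ z in 𝓝[≠] t₀ ⊓ 𝓟 {t : ℝ | f t = 0}, f z = 0 :=
      (eventually_principal.mpr (fun x hx => hx)).filter_mono inf_le_right
    haveI : (𝓝[≠] t₀ ⊓ 𝓟 {t : ℝ | f t = 0}).NeBot := hacc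
    rcases (h1.and h2).exists with ⟨x, hx1, hx2⟩
    exact hx1 hx2
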